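/- Let E be a nonzero reflexive Banach space and S : E ⇉ E* and T : E* ⇉ E be maximally monotone. Suppose that either (i) π₁ dom φ_T = E* and there exists w* ∈ E* with E × {w*} ⊂ dom φ_S, or (ii) π₁ dom φ_S = E and there exists w ∈ E with E* × {w} ⊂ dom φ_T. Then (I_E + T∘S)(E) = E, i.e. for every x ∈ E there exists y ∈ E with x ∈ y + T(S(y)). -/

import Mathlib

set_option maxHeartbeats 1000000
set_option synthInstance.maxHeartbeats 1000000


open scoped Pointwise

noncomputable section

variable {E : Type*} [NormedAddCommGroup E] [NormedSpace ℝ E]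

/-- `E` is reflexive: the canonical map into the double dual is surjective. -/
def ReflexiveSp (E : Type*) [NormedAddCommGroup E] [NormedSpace ℝ E] : Prop :=
  Function.Surjective (NormedSpace.inclusionInDoubleDual ℝ E)

/-- The SSD pairing `⌊(x,x*),(y,y*)⌋ = ⟨x,y*⟩ + ⟨y,x*⟩` on `E × E*`. -/
def pairP (p r : E × StrongDual ℝ E) : ℝ := r.2 p.1 + p.2 r.1

/-- `q(x,x*) = ⟨x,x*⟩`. -/
def qP (p : E × StrongDual ℝ E) : ℝ := p.2 p.1

/-- The intrinsic conjugate `f^@(c) = sup_b (⌊b,c⌋ - f(b))` on `E × E*`. -/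
def conjP (f : E × StrongDual ℝ E → EReal) (c : E × StrongDual ℝ E) : EReal :=
  ⨆ b : E × StrongDual ℝ E, ((pairP b c : ℝ) : EReal) - f b

/-- A proper function into `(-∞,∞]`: never `⊥` and somewhere finite. -/
def ProperFnP (f : E × StrongDual ℝ E → EReal) : Prop :=
  (∀ p, f p ≠ ⊥) ∧ ∃ p, f p ≠ ⊤

/-- Convexity for `(-∞,∞]`-valued functions on `E × E*`. -/
def ConvexFnP (f : E × StrongDual ℝ E → EReal) : Prop :=
  ∀ p r : E × StrongDual ℝ E, ∀ t : ℝ, 0 ≤ t → t ≤ 1 →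
    f (t • p + (1 - t) • r) ≤ (t : EReal) * f p + ((1 - t : ℝ) : EReal) * f r

/-- `P_q(f) = {b : f(b) = q(b)}`. -/
def PqP (f : E × StrongDual ℝ E → EReal) : Set (E × StrongDual ℝ E) :=
  {p | f p = ((qP p : ℝ) : EReal)}

/-- `f` is a BC-function: `f^@(b) ≥ f(b) ≥ q(b)` for all `b`. -/
def IsBCP (f : E × StrongDual ℝ E → EReal) : Prop :=
  ∀ p : E × StrongDual ℝ E, ((qP p : ℝ) : EReal) ≤ f p ∧ f p ≤ conjP f p

/-- The effective domain of an `EReal`-valued function on `E × E*`. -/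
def domP (f : E × StrongDual ℝ E → EReal) : Set (E × StrongDual ℝ E) :=
  {p | ∃ r : ℝ, f p = (r : EReal)}

/-- A monotone subset of `E × E*`. -/
def MonoSet (A : Set (E × StrongDual ℝ E)) : Prop :=
  ∀ p ∈ A, ∀ r ∈ A, 0 ≤ (p.2 - r.2) (p.1 - r.1)

/-- A maximally monotone subset of `E × E*`. -/
def MaxMono (A : Set (E × StrongDual ℝ E)) : Prop :=
  A.Nonempty ∧ MonoSet A ∧ ∀ C : Set (E × StrongDual ℝ E), MonoSet C → A ⊆ C → C = A

/-- `G(-J) = {(x,x*) : ½‖x‖² + ½‖x*‖² = -⟨x,x*⟩}` where `J` is the duality map. -/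
def GnegJ (E : Type*) [NormedAddCommGroup E] [NormedSpace ℝ E] :
    Set (E × StrongDual ℝ E) :=
  {p | (1 / 2) * ‖p.1‖ ^ 2 + (1 / 2) * ‖p.2‖ ^ 2 = -(p.2 p.1)}

/-- The graph of a multifunction `S : E ⇉ E*`. -/
def graphOf (S : E → Set (StrongDual ℝ E)) : Set (E × StrongDual ℝ E) :=
  {p | p.2 ∈ S p.1}

/-- `S : E ⇉ E*` is maximally monotone. -/
def MaxMonoOp (S : E → Set (StrongDual ℝ E)) : Prop := MaxMono (graphOf S)

/-- The Fitzpatrick function of a multifunction `S : E ⇉ E*`: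
`φ_S(x,x*) = sup_{(s,s*) ∈ G(S)} (⟨x,s*⟩ + ⟨s,x*⟩ - ⟨s,s*⟩)`. -/
def fitz (S : E → Set (StrongDual ℝ E)) (p : E × StrongDual ℝ E) : EReal :=
  ⨆ s : graphOf S,
    (((s : E × StrongDual ℝ E).2 p.1 + p.2 (s : E × StrongDual ℝ E).1
      - (s : E × StrongDual ℝ E).2 (s : E × StrongDual ℝ E).1 : ℝ) : EReal)

/-- The domain `D(S) = {x : Sx ≠ ∅}` of a multifunction. -/
def domOp (S : E → Set (StrongDual ℝ E)) : Set E := {x | (S x).Nonempty}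


/-- The graph of a multifunction `T : E* ⇉ E`. -/
def graphOfT (T : StrongDual ℝ E → Set E) : Set (StrongDual ℝ E × E) :=
  {p | p.2 ∈ T p.1}

/-- A monotone subset of `E* × E` (using the pairing between `E*` and `E`). -/
def MonoSetT (A : Set (StrongDual ℝ E × E)) : Prop :=
  ∀ p ∈ A, ∀ r ∈ A, 0 ≤ (p.1 - r.1) (p.2 - r.2)

/-- `T : E* ⇉ E` is maximally monotone. -/
def MaxMonoOpT (T : StrongDual ℝ E → Set E) : Prop :=
  (graphOfT T).Nonempty ∧ MonoSetT (graphOfT T) ∧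
    ∀ C : Set (StrongDual ℝ E × E), MonoSetT C → graphOfT T ⊆ C → C = graphOfT T

/-- The Fitzpatrick function of `T : E* ⇉ E`:
`φ_T(x*,x) = sup_{(s*,s) ∈ G(T)} (⟨x*,s⟩ + ⟨s*,x⟩ - ⟨s*,s⟩)`. -/
def fitzT (T : StrongDual ℝ E → Set E) (p : StrongDual ℝ E × E) : EReal :=
  ⨆ s : graphOfT T,
    ((p.1 (s : StrongDual ℝ E × E).2 + (s : StrongDual ℝ E × E).1 p.2
      - (s : StrongDual ℝ E × E).1 (s : StrongDual ℝ E × E).2 : ℝ) : EReal)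

/-- The effective domain of an `EReal`-valued function on `E* × E`. -/
def domPT (f : StrongDual ℝ E × E → EReal) : Set (StrongDual ℝ E × E) :=
  {p | ∃ r : ℝ, f p = (r : EReal)}

/-! ### Auxiliary material for the proof of statement 19 -/

section Stmt19Aux

open Filter Metric NormedSpace

/-- Sublevel formulation of `fitz S b ≤ r`. -/
def SleP (S : E → Set (StrongDual ℝ E)) (b : E × StrongDual ℝ E) (r : ℝ) : Prop :=
  ∀ s ∈ graphOf S, s.2 b.1 + b.2 s.1 - s.2 s.1 ≤ r

/-- Sublevel formulation of `fitzT T p ≤ r`. -/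
def TleP (T : StrongDual ℝ E → Set E) (p : StrongDual ℝ E × E) (r : ℝ) : Prop :=
  ∀ s ∈ graphOfT T, p.1 s.2 + s.1 p.2 - s.1 s.2 ≤ r

lemma SleP_of_mem_domP {S : E → Set (StrongDual ℝ E)} {b : E × StrongDual ℝ E}
    (h : b ∈ domP (fitz S)) : ∃ r : ℝ, SleP S b r := by
  obtain ⟨r, hr⟩ := h
  refine ⟨r, fun s hs => ?_⟩
  have hle : ((s.2 b.1 + b.2 s.1 - s.2 s.1 : ℝ) : EReal) ≤ fitz S b :=
    le_iSup (fun t : graphOf S =>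
      (((t : E × StrongDual ℝ E).2 b.1 + b.2 (t : E × StrongDual ℝ E).1
        - (t : E × StrongDual ℝ E).2 (t : E × StrongDual ℝ E).1 : ℝ) : EReal))
      (⟨s, hs⟩ : graphOf S)
  rw [hr] at hle
  exact_mod_cast hle

lemma TleP_of_mem_domPT {T : StrongDual ℝ E → Set E} {p : StrongDual ℝ E × E}
    (h : p ∈ domPT (fitzT T)) : ∃ r : ℝ, TleP T p r := by
  obtain ⟨r, hr⟩ := h
  refine ⟨r, fun s hs => ?_⟩
  have hle : ((p.1 s.2 + s.1 p.2 - s.1 s.2 : ℝ) : EReal) ≤ fitzT T p :=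
    le_iSup (fun t : graphOfT T =>
      ((p.1 (t : StrongDual ℝ E × E).2 + (t : StrongDual ℝ E × E).1 p.2
        - (t : StrongDual ℝ E × E).1 (t : StrongDual ℝ E × E).2 : ℝ) : EReal))
      (⟨s, hs⟩ : graphOfT T)
  rw [hr] at hle
  exact_mod_cast hle

lemma gmemS {S : E → Set (StrongDual ℝ E)} (hS : MaxMonoOp S)
    {b : E × StrongDual ℝ E} (h : SleP S b (b.2 b.1)) : b ∈ graphOf S := by
  obtain ⟨-, hmono, hmax⟩ := hS
  have hmono' : MonoSet (insert b (graphOf S)) := by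
    intro p hp r hr
    rcases Set.mem_insert_iff.1 hp with hp' | hp' <;>
      rcases Set.mem_insert_iff.1 hr with hr' | hr'
    · rw [hp', hr']; simp
    · rw [hp']
      have h1 := h r hr'
      have e : (b.2 - r.2) (b.1 - r.1)
          = b.2 b.1 - (r.2 b.1 + b.2 r.1 - r.2 r.1) := by
        simp only [ContinuousLinearMap.sub_apply, map_sub]
        ring
      rw [e]; linarith
    · rw [hr']
      have h1 := h p hp'
      have e : (p.2 - b.2) (p.1 - b.1)
          = b.2 b.1 - (b.2 p.1 + p.2 b.1 - p.2 p.1) := by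
        simp only [ContinuousLinearMap.sub_apply, map_sub]
        ring
      rw [e]; linarith
    · exact hmono p hp' r hr' 
  have := hmax _ hmono' (Set.subset_insert _ _)
  rw [← this]
  exact Set.mem_insert _ _

lemma gmemT {T : StrongDual ℝ E → Set E} (hT : MaxMonoOpT T)
    {p : StrongDual ℝ E × E} (h : TleP T p (p.1 p.2)) : p ∈ graphOfT T := by
  obtain ⟨-, hmono, hmax⟩ := hT
  have hmono' : MonoSetT (insert p (graphOfT T)) := by
    intro a ha r hr
    rcases Set.mem_insert_iff.1 ha with ha' | ha' <;>
      rcases Set.mem_insert_iff.1 hr with hr' | hr'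
    · rw [ha', hr']; simp
    · rw [ha']
      have h1 := h r hr'
      have e : (p.1 - r.1) (p.2 - r.2)
          = p.1 p.2 - (p.1 r.2 + r.1 p.2 - r.1 r.2) := by
        simp only [ContinuousLinearMap.sub_apply, map_sub]
        ring
      rw [e]; linarith
    · rw [hr']
      have h1 := h a ha'
      have e : (a.1 - p.1) (a.2 - p.2)
          = p.1 p.2 - (p.1 a.2 + a.1 p.2 - a.1 a.2) := by
        simp only [ContinuousLinearMap.sub_apply, map_sub]
        ring
      rw [e]; linarith
    · exact hmono a ha' r hr' 
  have := hmax _ hmono' (Set.subset_insert _ _)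
  rw [← this]
  exact Set.mem_insert _ _

lemma SleP_self {S : E → Set (StrongDual ℝ E)} (hmono : MonoSet (graphOf S))
    {s : E × StrongDual ℝ E} (hs : s ∈ graphOf S) : SleP S s (s.2 s.1) := by
  intro p hp
  have h1 := hmono s hs p hp
  have e : (s.2 - p.2) (s.1 - p.1)
      = s.2 s.1 - (p.2 s.1 + s.2 p.1 - p.2 p.1) := by
    simp only [ContinuousLinearMap.sub_apply, map_sub]
    ring
  rw [e] at h1; linarith

lemma TleP_self {T : StrongDual ℝ E → Set E} (hmono : MonoSetT (graphOfT T))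
    {p : StrongDual ℝ E × E} (hp : p ∈ graphOfT T) : TleP T p (p.1 p.2) := by
  intro s hs
  have h1 := hmono p hp s hs
  have e : (p.1 - s.1) (p.2 - s.2)
      = p.1 p.2 - (p.1 s.2 + s.1 p.2 - s.1 s.2) := by
    simp only [ContinuousLinearMap.sub_apply, map_sub]
    ring
  rw [e] at h1; linarith

lemma qleS {S : E → Set (StrongDual ℝ E)} (hS : MaxMonoOp S)
    {b : E × StrongDual ℝ E} {r : ℝ} (h : SleP S b r) : b.2 b.1 ≤ r := by
  by_cases hb : b ∈ graphOf S
  · have := h b hb; linarith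
  · by_contra hlt
    push_neg at hlt
    exact hb (gmemS hS fun s hs => (h s hs).trans hlt.le)

lemma qleT {T : StrongDual ℝ E → Set E} (hT : MaxMonoOpT T)
    {p : StrongDual ℝ E × E} {r : ℝ} (h : TleP T p r) : p.1 p.2 ≤ r := by
  by_cases hp : p ∈ graphOfT T
  · have := h p hp; linarith
  · by_contra hlt
    push_neg at hlt
    exact hp (gmemT hT fun s hs => (h s hs).trans hlt.le)

/-- A cluster value of a real sequence dominated by a convergent sequence is dominated
by the limit. -/
lemma st19_cluster_le {a c : ℕ → ℝ} {L C : ℝ} (h : MapClusterPt L Filter.atTop a)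
    (hc : Filter.Tendsto c Filter.atTop (nhds C)) (hac : ∀ k, a k ≤ c k) : L ≤ C := by
  by_contra hlt
  push_neg at hlt
  have hε0 : 0 < (L - C) / 3 := by linarith
  have h1 : ∃ᶠ k in Filter.atTop, a k ∈ Metric.ball L ((L - C) / 3) :=
    mapClusterPt_iff_frequently.1 h _ (Metric.ball_mem_nhds _ hε0)
  have h2 : ∀ᶠ k in Filter.atTop, c k ∈ Metric.ball C ((L - C) / 3) :=
    hc (Metric.ball_mem_nhds _ hε0)
  obtain ⟨k, hk1, hk2⟩ := (h1.and_eventually h2).exists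
  rw [Metric.mem_ball, Real.dist_eq, abs_lt] at hk1 hk2
  have := hac k
  linarith [hk1.1, hk2.2]

lemma st19_mapClusterPt_comp {X Y : Type*} [TopologicalSpace X] [TopologicalSpace Y]
    {F : Filter ℕ} {u : ℕ → X} {p : X} {f : X → Y} (h : MapClusterPt p F u)
    (hf : Continuous f) : MapClusterPt (f p) F (f ∘ u) := by
  have h1 : ClusterPt (f p) (Filter.map f (Filter.map u F)) :=
    ClusterPt.map h hf.continuousAt Filter.tendsto_map
  rwa [Filter.map_map] at h1

/-- The key compactness lemma: the approximate-decomposition sets are closed,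
thanks to reflexivity (weak compactness of balls). -/
lemma st19_Dn_closed (hrefl : ReflexiveSp E)
    (S : E → Set (StrongDual ℝ E)) (T : StrongDual ℝ E → Set E) (x : E) (n : ℝ) :
    IsClosed {z : E × StrongDual ℝ E |
      ∃ b : E × StrongDual ℝ E, ‖b.1‖ ≤ n ∧ ‖b.2‖ ≤ n ∧
        SleP S (b + z) n ∧ TleP T (b.2, x - b.1) n} := by
  apply IsSeqClosed.isClosed
  intro zs z hz hzlim
  choose b hb1 hb2 hb3 hb4 using hz
  -- move to the weak-star topologies
  set W₁ := WeakDual ℝ (StrongDual ℝ E)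
  set W₂ := WeakDual ℝ E
  set Φ : ℕ → W₁ × W₂ := fun k =>
    (NormedSpace.inclusionInDoubleDual ℝ E (b k).1, (b k).2) with hΦ
  have hnorm : ∀ v : E, ‖NormedSpace.inclusionInDoubleDual ℝ E v‖ = ‖v‖ := fun v =>
    (NormedSpace.inclusionInDoubleDualLi ℝ (E := E)).norm_map v
  set K : Set (W₁ × W₂) :=
    (WeakDual.toStrongDual ⁻¹' Metric.closedBall 0 n) ×ˢ
      (WeakDual.toStrongDual ⁻¹' Metric.closedBall 0 n) with hK
  have hKc : IsCompact K :=
    (WeakDual.isCompact_closedBall (𝕜 := ℝ) 0 n).prod (WeakDual.isCompact_closedBall (𝕜 := ℝ) 0 n)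
  have hmem : ∀ k, Φ k ∈ K := by
    intro k
    constructor
    · simp only [Set.mem_preimage, Metric.mem_closedBall, dist_zero_right]
      refine le_trans (le_of_eq (@dist_zero_right (StrongDual ℝ (StrongDual ℝ E)) _ _)) ?_
      show ‖NormedSpace.inclusionInDoubleDual ℝ E (b k).1‖ ≤ n
      rw [hnorm]; exact hb1 k
    · simp only [Set.mem_preimage, Metric.mem_closedBall, dist_zero_right]
      exact hb2 k
  have hle : Filter.map Φ Filter.atTop ≤ Filter.principal K :=
    Filter.le_principal_iff.2 (Filter.mem_map.2 (Filter.Eventually.of_forall hmem))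
  obtain ⟨c, hcK, hclc⟩ := hKc.exists_mapClusterPt hle
  obtain ⟨u, hu⟩ := hrefl (WeakDual.toStrongDual c.1)
  set g : StrongDual ℝ E := WeakDual.toStrongDual c.2 with hg
  have hcu : ∀ f : StrongDual ℝ E, c.1 f = f u := by
    intro f
    have h0 : NormedSpace.inclusionInDoubleDual ℝ E u f = f u := rfl
    rw [hu] at h0
    exact h0
  have hun : ‖u‖ ≤ n := by
    have h1 : ‖WeakDual.toStrongDual c.1‖ ≤ n := by
      have := hcK.1
      simp only [Set.mem_preimage, Metric.mem_closedBall] at this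
      exact le_trans (le_of_eq (@dist_zero_right (StrongDual ℝ (StrongDual ℝ E)) _ _).symm) this
    rw [← hu, hnorm] at h1
    exact h1
  have hgn : ‖g‖ ≤ n := by
    have := hcK.2
    simpa [Metric.mem_closedBall, dist_zero_right] using this
  refine ⟨(u, g), hun, hgn, ?_, ?_⟩
  · -- SleP S ((u,g) + z) n
    intro s hs
    -- the weakly-continuous functional
    have hcont : Continuous fun w : W₁ × W₂ => w.1 s.2 + w.2 s.1 :=
      ((WeakDual.eval_continuous s.2).comp continuous_fst).add
        ((WeakDual.eval_continuous s.1).comp continuous_snd)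
    have hcl := st19_mapClusterPt_comp hclc hcont
    have hbound : ∀ k, ((fun w : W₁ × W₂ => w.1 s.2 + w.2 s.1) ∘ Φ) k
        ≤ n + s.2 s.1 - s.2 (zs k).1 - (zs k).2 s.1 := by
      intro k
      show (Φ k).1 s.2 + (Φ k).2 s.1 ≤ _
      have h1 := hb3 k s hs
      have e1 : s.2 ((b k + zs k).1) = s.2 (b k).1 + s.2 (zs k).1 := by
        rw [Prod.fst_add, map_add]
      have e2 : ((b k + zs k).2) s.1 = (b k).2 s.1 + (zs k).2 s.1 := by
        rw [Prod.snd_add, ContinuousLinearMap.add_apply]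
      have e3 : (Φ k).1 s.2 = s.2 (b k).1 := rfl
      have e4 : (Φ k).2 s.1 = (b k).2 s.1 := rfl
      rw [e1, e2] at h1
      rw [e3, e4]
      linarith
    have htend : Filter.Tendsto (fun k => n + s.2 s.1 - s.2 (zs k).1 - (zs k).2 s.1)
        Filter.atTop (nhds (n + s.2 s.1 - s.2 z.1 - z.2 s.1)) := by
      have hz1 : Filter.Tendsto (fun k => (zs k).1) Filter.atTop (nhds z.1) :=
        (continuous_fst.tendsto z).comp hzlim
      have hz2 : Filter.Tendsto (fun k => (zs k).2) Filter.atTop (nhds z.2) :=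
        (continuous_snd.tendsto z).comp hzlim
      have t1 : Filter.Tendsto (fun k => s.2 (zs k).1) Filter.atTop (nhds (s.2 z.1)) :=
        (s.2.continuous.tendsto z.1).comp hz1
      have t2 : Filter.Tendsto (fun k => (zs k).2 s.1) Filter.atTop (nhds (z.2 s.1)) :=
        ((NormedSpace.inclusionInDoubleDual ℝ E s.1).continuous.tendsto z.2).comp hz2
      exact ((tendsto_const_nhds.sub t1).sub t2).congr (fun k => by ring)
    have hfin := st19_cluster_le hcl htend hbound
    have e5 : c.1 s.2 = s.2 u := hcu s.2
    have e6 : s.2 (((u, g) + z).1) = s.2 u + s.2 z.1 := by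
      rw [Prod.fst_add, map_add]
    have e7 : (((u, g) + z).2) s.1 = g s.1 + z.2 s.1 := by
      rw [Prod.snd_add, ContinuousLinearMap.add_apply]
    have e8 : (c.2 : StrongDual ℝ E) s.1 = g s.1 := rfl
    rw [e5, e8] at hfin
    rw [e6, e7]
    linarith
  · -- TleP T (g, x - u) n
    intro t ht
    have hcont : Continuous fun w : W₁ × W₂ => w.2 t.2 - w.1 t.1 :=
      ((WeakDual.eval_continuous t.2).comp continuous_snd).sub
        ((WeakDual.eval_continuous t.1).comp continuous_fst)
    have hcl := st19_mapClusterPt_comp hclc hcont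
    have hbound : ∀ k, ((fun w : W₁ × W₂ => w.2 t.2 - w.1 t.1) ∘ Φ) k
        ≤ n + t.1 t.2 - t.1 x := by
      intro k
      show (Φ k).2 t.2 - (Φ k).1 t.1 ≤ _
      have h1 := hb4 k t ht
      have e1 : t.1 (x - (b k).1) = t.1 x - t.1 (b k).1 := map_sub _ _ _
      have e3 : (Φ k).1 t.1 = t.1 (b k).1 := rfl
      have e4 : (Φ k).2 t.2 = (b k).2 t.2 := rfl
      rw [e3, e4]
      simp only at h1
      rw [e1] at h1
      linarith
    have hfin := st19_cluster_le hcl tendsto_const_nhds hbound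
    have e5 : c.1 t.1 = t.1 u := hcu t.1
    have e8 : (c.2 : StrongDual ℝ E) t.2 = g t.2 := rfl
    rw [e5, e8] at hfin
    have e9 : t.1 (x - u) = t.1 x - t.1 u := map_sub _ _ _
    simp only
    rw [e9]
    linarith

/-- The separation lemma: a convex set in `F × ℝ` containing an open box around the
vertical axis and meeting the vertical axis only at nonnegative heights admits a
continuous linear minorant. -/
lemma st19_separation {F : Type*} [NormedAddCommGroup F] [NormedSpace ℝ F]
    {A : Set (F × ℝ)} (hconv : Convex ℝ A) {δ M : ℝ} (hδ : 0 < δ)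
    (hO : Metric.ball (0 : F) δ ×ˢ Set.Ioi M ⊆ A)
    (hpos : ∀ t : ℝ, ((0 : F), t) ∈ A → 0 ≤ t) :
    ∃ c : F →L[ℝ] ℝ, ∀ p ∈ A, c p.1 ≤ p.2 := by
  have hOint : Metric.ball (0 : F) δ ×ˢ Set.Ioi M ⊆ interior A :=
    interior_maximal hO (Metric.isOpen_ball.prod isOpen_Ioi)
  set M' : ℝ := max M 0 + 1 with hM'
  have hM'M : M < M' := lt_of_le_of_lt (le_max_left _ _) (by linarith)
  have hM'0 : 0 < M' := lt_of_le_of_lt (le_max_right _ _) (by linarith)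
  have hpM' : ((0 : F), M') ∈ interior A := by
    apply hOint
    exact ⟨Metric.mem_ball_self hδ, hM'M⟩
  have hpt : ((0 : F), (0 : ℝ)) ∉ interior A := by
    intro hmem
    obtain ⟨ε, hε0, hball⟩ := Metric.mem_nhds_iff.1 (mem_interior_iff_mem_nhds.1 hmem)
    have hmem2 : ((0 : F), -(ε / 2)) ∈ A := by
      apply hball
      rw [Metric.mem_ball]
      rw [Prod.dist_eq]
      simp only [dist_self, Real.dist_eq]
      rw [max_lt_iff]
      constructor
      · exact hε0
      · rw [sub_zero, abs_neg, abs_of_pos (by linarith)]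
        linarith
    have := hpos _ hmem2
    linarith
  obtain ⟨ℓ, hℓ⟩ := geometric_hahn_banach_open_point (hconv.interior) isOpen_interior hpt
  have hℓ0 : ℓ ((0 : F), (0 : ℝ)) = 0 := map_zero ℓ
  rw [hℓ0] at hℓ
  set β : ℝ := ℓ (0, 1) with hβ
  have hdecomp : ∀ (w : F) (t : ℝ), ℓ (w, t) = ℓ (w, 0) + t * β := by
    intro w t
    have e1 : ((w, t) : F × ℝ) = (w, 0) + t • ((0 : F), (1 : ℝ)) := by
      simp [Prod.ext_iff]
    rw [e1, map_add, map_smul]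
    simp [hβ, smul_eq_mul]
  have hβneg : β < 0 := by
    have h1 := hℓ _ hpM'
    rw [hdecomp 0 M', hℓ0, zero_add] at h1
    by_contra hge
    push_neg at hge
    nlinarith
  have hkey : ∀ p ∈ A, ℓ (p.1, 0) + p.2 * β ≤ 0 := by
    intro p hp
    have hcombo : ∀ j : ℕ, ℓ ((1 / (j + 1) : ℝ) • ((0 : F), M') + ((1 : ℝ) - 1 / (j + 1)) • p) < 0 := by
      intro j
      apply hℓ
      have hj0 : (0 : ℝ) < 1 / (j + 1) := by positivity
      have hj1 : 1 / ((j : ℝ) + 1) ≤ 1 := by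
        rw [div_le_one (by positivity)]
        linarith [Nat.cast_nonneg (α := ℝ) j]
      exact hconv.combo_interior_closure_mem_interior (a := (1 / (j + 1) : ℝ))
        (b := ((1 : ℝ) - 1 / (j + 1))) hpM' (subset_closure hp) hj0 (by linarith) (by ring)
    have heq : ∀ j : ℕ, ℓ ((1 / (j + 1) : ℝ) • ((0 : F), M') + ((1 : ℝ) - 1 / (j + 1)) • p)
        = (1 / (j + 1) : ℝ) * (M' * β) + (1 - 1 / (j + 1)) * ℓ p := by
      intro j
      rw [map_add, ℓ.map_smul, ℓ.map_smul]
      have e2 : ℓ ((0 : F), M') = M' * β := by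
        rw [hdecomp 0 M', hℓ0, zero_add]
      rw [e2]
      simp [smul_eq_mul]
    have htend : Filter.Tendsto
        (fun j : ℕ => (1 / ((j : ℝ) + 1)) * (M' * β) + (1 - 1 / ((j : ℝ) + 1)) * ℓ p)
        Filter.atTop (nhds (ℓ p)) := by
      have h0 : Filter.Tendsto (fun j : ℕ => 1 / ((j : ℝ) + 1)) Filter.atTop (nhds 0) :=
        tendsto_one_div_add_atTop_nhds_zero_nat
      have h1 : Filter.Tendsto (fun j : ℕ => ((1 : ℝ) - 1 / ((j : ℝ) + 1)))
          Filter.atTop (nhds 1) := by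
        simpa using (tendsto_const_nhds (x := (1 : ℝ))
          (f := (Filter.atTop : Filter ℕ))).sub h0
      have h2 := (h0.mul_const (M' * β)).add (h1.mul_const (ℓ p))
      simpa using h2
    have hlim : ℓ p ≤ 0 := by
      apply le_of_tendsto htend
      filter_upwards with j
      calc (1 / ((j : ℝ) + 1)) * (M' * β) + (1 - 1 / ((j : ℝ) + 1)) * ℓ p
          = ℓ ((1 / (j + 1) : ℝ) • ((0 : F), M') + ((1 : ℝ) - 1 / (j + 1)) • p) := (heq j).symm
        _ ≤ 0 := le_of_lt (hcombo j)
    have : ℓ p = ℓ (p.1, 0) + p.2 * β := by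
      conv_lhs => rw [show p = (p.1, p.2) from rfl]
      exact hdecomp p.1 p.2
    linarith [hlim, this.symm.le, this.le]
  refine ⟨(-β)⁻¹ • (ℓ.comp (ContinuousLinearMap.inl ℝ F ℝ)), ?_⟩
  intro p hp
  have h1 := hkey p hp
  have hβpos : 0 < -β := by linarith
  have e : ((-β)⁻¹ • (ℓ.comp (ContinuousLinearMap.inl ℝ F ℝ))) p.1
      = (-β)⁻¹ * ℓ (p.1, 0) := by
    simp [ContinuousLinearMap.smul_apply, ContinuousLinearMap.comp_apply,
      ContinuousLinearMap.inl_apply, smul_eq_mul]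
  rw [e]
  rw [inv_mul_le_iff₀ hβpos]
  nlinarith

end Stmt19Aux

/-- an abstract Hammerstein theorem.  If `E` is a nonzero reflexive Banach
space, `S : E ⇉ E*` and `T : E* ⇉ E` are maximally monotone, and either
(i) `π₁ dom φ_T = E*` and `E × {w*} ⊆ dom φ_S` for some `w*`, or
(ii) `π₁ dom φ_S = E` and `E* × {w} ⊆ dom φ_T` for some `w`,
then `(I_E + T∘S)(E) = E`. -/
theorem stmt19 [CompleteSpace E] [Nontrivial E] (hrefl : ReflexiveSp E)
    (S : E → Set (StrongDual ℝ E)) (T : StrongDual ℝ E → Set E)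
    (hS : MaxMonoOp S) (hT : MaxMonoOpT T)
    (hcond :
      (Prod.fst '' domPT (fitzT T) = (Set.univ : Set (StrongDual ℝ E)) ∧
        ∃ wstar : StrongDual ℝ E, ∀ x : E, (x, wstar) ∈ domP (fitz S)) ∨
      (Prod.fst '' domP (fitz S) = (Set.univ : Set E) ∧
        ∃ w : E, ∀ xstar : StrongDual ℝ E, (xstar, w) ∈ domPT (fitzT T))) :
    ∀ x : E, ∃ y : E, ∃ xstar ∈ S y, ∃ z ∈ T xstar, x = y + z := by
  intro x
  classical
  obtain ⟨hSne, hSmono, -⟩ := id hS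
  obtain ⟨hTne, hTmono, -⟩ := id hT
  -- the "epigraph" set of the perturbed infimal value function
  set A : Set ((E × StrongDual ℝ E) × ℝ) :=
    {p | ∃ b : E × StrongDual ℝ E, ∃ rf rt : ℝ,
      SleP S (b + p.1) rf ∧ TleP T (b.2, x - b.1) rt ∧ rf + rt - b.2 x ≤ p.2} with hA
  -- the constraint qualification coming from `hcond`
  have hqual : ∀ z : E × StrongDual ℝ E, ∃ b : E × StrongDual ℝ E, ∃ rf rt : ℝ,
      SleP S (b + z) rf ∧ TleP T (b.2, x - b.1) rt := by
    rcases hcond with ⟨h1, w, h2⟩ | ⟨h1, w, h2⟩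
    · intro z
      have hw : w - z.2 ∈ Prod.fst '' domPT (fitzT T) := by rw [h1]; trivial
      obtain ⟨p, hp, hp1⟩ := hw
      obtain ⟨rt, hrt⟩ := TleP_of_mem_domPT hp
      obtain ⟨rf, hrf⟩ := SleP_of_mem_domP (h2 (x - p.2 + z.1))
      refine ⟨(x - p.2, w - z.2), rf, rt, ?_, ?_⟩
      · have e : ((x - p.2 : E), (w - z.2 : StrongDual ℝ E)) + z
            = (x - p.2 + z.1, w) :=
          Prod.ext_iff.2 ⟨rfl, by show (w - z.2) + z.2 = w; abel⟩
        rw [e]; exact hrf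
      · show TleP T ((w - z.2 : StrongDual ℝ E), x - (x - p.2)) rt
        have e : ((w - z.2 : StrongDual ℝ E), x - (x - p.2)) = p :=
          Prod.ext_iff.2 ⟨hp1.symm, by show x - (x - p.2) = p.2; abel⟩
        rw [e]; exact hrt
    · intro z
      have hw : x - w + z.1 ∈ Prod.fst '' domP (fitz S) := by rw [h1]; trivial
      obtain ⟨p, hp, hp1⟩ := hw
      obtain ⟨rf, hrf⟩ := SleP_of_mem_domP hp
      obtain ⟨rt, hrt⟩ := TleP_of_mem_domPT (h2 (p.2 - z.2))
      refine ⟨(x - w, p.2 - z.2), rf, rt, ?_, ?_⟩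
      · have e : ((x - w : E), (p.2 - z.2 : StrongDual ℝ E)) + z = p :=
          Prod.ext_iff.2 ⟨by show (x - w) + z.1 = p.1; rw [hp1], by
            show (p.2 - z.2) + z.2 = p.2; abel⟩
        rw [e]; exact hrf
      · show TleP T ((p.2 - z.2 : StrongDual ℝ E), x - (x - w)) rt
        have e : x - (x - w) = w := by abel
        rw [e]; exact hrt
  -- positivity on the vertical axis
  have hA0 : ∀ t : ℝ, (((0 : E × StrongDual ℝ E), t)) ∈ A → 0 ≤ t := by
    rintro t ⟨b, rf, rt, h1, h2, h3⟩
    have h1' : SleP S (b + 0) rf := h1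
    rw [add_zero] at h1'
    have q1 := qleS hS h1'
    have q2 : b.2 (x - b.1) ≤ rt := qleT hT h2
    have e : b.2 (x - b.1) = b.2 x - b.2 b.1 := map_sub _ _ _
    rw [e] at q2
    linarith
  -- convexity of A
  have hconv : Convex ℝ A := by
    intro p hp q hq a bb ha hb hab
    obtain ⟨b1, rf1, rt1, hs1, ht1, hle1⟩ := hp
    obtain ⟨b2, rf2, rt2, hs2, ht2, hle2⟩ := hq
    refine ⟨a • b1 + bb • b2, a * rf1 + bb * rf2, a * rt1 + bb * rt2, ?_, ?_, ?_⟩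
    · intro s hs
      have e1 := hs1 s hs
      have e2 := hs2 s hs
      have h3 : a * (s.2 (b1 + p.1).1 + (b1 + p.1).2 s.1 - s.2 s.1)
          + bb * (s.2 (b2 + q.1).1 + (b2 + q.1).2 s.1 - s.2 s.1) ≤ a * rf1 + bb * rf2 :=
        add_le_add (mul_le_mul_of_nonneg_left e1 ha) (mul_le_mul_of_nonneg_left e2 hb)
      refine le_trans (le_of_eq ?_) h3
      simp only [Prod.fst_add, Prod.snd_add, Prod.smul_fst, Prod.smul_snd, map_add,
        map_smul, ContinuousLinearMap.add_apply, ContinuousLinearMap.smul_apply,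
        smul_eq_mul]
      linear_combination (s.2 s.1) * hab
    · intro t ht
      have e1 := ht1 t ht
      have e2 := ht2 t ht
      have h3 : a * (b1.2 t.2 + t.1 (x - b1.1) - t.1 t.2)
          + bb * (b2.2 t.2 + t.1 (x - b2.1) - t.1 t.2) ≤ a * rt1 + bb * rt2 :=
        add_le_add (mul_le_mul_of_nonneg_left e1 ha) (mul_le_mul_of_nonneg_left e2 hb)
      refine le_trans (le_of_eq ?_) h3
      simp only [Prod.fst_add, Prod.snd_add, Prod.smul_fst, Prod.smul_snd, map_add,
        map_sub, map_smul, ContinuousLinearMap.add_apply, ContinuousLinearMap.smul_apply,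
        smul_eq_mul]
      linear_combination (t.1 t.2 - t.1 x) * hab
    · have h3 : a * (rf1 + rt1 - b1.2 x) + bb * (rf2 + rt2 - b2.2 x)
          ≤ a * p.2 + bb * q.2 :=
        add_le_add (mul_le_mul_of_nonneg_left hle1 ha) (mul_le_mul_of_nonneg_left hle2 hb)
      show a * rf1 + bb * rf2 + (a * rt1 + bb * rt2)
          - ((a • b1 + bb • b2).2) x ≤ (a • p + bb • q).2
      refine le_trans (le_of_eq ?_) (le_trans h3 (le_of_eq ?_))
      · simp only [Prod.snd_add, Prod.smul_snd, ContinuousLinearMap.add_apply,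
          ContinuousLinearMap.smul_apply, smul_eq_mul]
        ring
      · simp only [Prod.snd_add, Prod.smul_snd, smul_eq_mul]
  -- the Baire category argument
  have hDclosed : ∀ n : ℕ, IsClosed {z : E × StrongDual ℝ E |
      ∃ b : E × StrongDual ℝ E, ‖b.1‖ ≤ (n : ℝ) ∧ ‖b.2‖ ≤ (n : ℝ) ∧
        SleP S (b + z) (n : ℝ) ∧ TleP T (b.2, x - b.1) (n : ℝ)} :=
    fun n => st19_Dn_closed hrefl S T x n
  have hDcover : (⋃ n : ℕ, {z : E × StrongDual ℝ E |
      ∃ b : E × StrongDual ℝ E, ‖b.1‖ ≤ (n : ℝ) ∧ ‖b.2‖ ≤ (n : ℝ) ∧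
        SleP S (b + z) (n : ℝ) ∧ TleP T (b.2, x - b.1) (n : ℝ)}) = Set.univ := by
    ext z
    simp only [Set.mem_iUnion, Set.mem_univ, iff_true, Set.mem_setOf_eq]
    obtain ⟨b, rf, rt, h1, h2⟩ := hqual z
    obtain ⟨n, hn⟩ := exists_nat_ge (max (max ‖b.1‖ ‖b.2‖) (max rf rt))
    refine ⟨n, b, ?_, ?_, ?_, ?_⟩
    · exact le_trans (le_trans (le_max_left _ _) (le_max_left _ _)) hn
    · exact le_trans (le_trans (le_max_right _ _) (le_max_left _ _)) hn
    · exact fun s hs => le_trans (h1 s hs)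
        (le_trans (le_trans (le_max_left _ _) (le_max_right _ _)) hn)
    · exact fun t ht => le_trans (h2 t ht)
        (le_trans (le_trans (le_max_right _ _) (le_max_right _ _)) hn)
  obtain ⟨N, hN⟩ := nonempty_interior_of_iUnion_of_closed hDclosed hDcover
  obtain ⟨z₀, hz₀⟩ := hN
  obtain ⟨δ, hδ0, hballs⟩ := Metric.isOpen_iff.1 isOpen_interior z₀ hz₀
  have hballD : Metric.ball z₀ δ ⊆ {z : E × StrongDual ℝ E |
      ∃ b : E × StrongDual ℝ E, ‖b.1‖ ≤ (N : ℝ) ∧ ‖b.2‖ ≤ (N : ℝ) ∧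
        SleP S (b + z) (N : ℝ) ∧ TleP T (b.2, x - b.1) (N : ℝ)} :=
    hballs.trans interior_subset
  -- a uniform upper bound on a small ball around the origin
  obtain ⟨b₁, rf₁, rt₁, hbs₁, hbt₁⟩ := hqual (-z₀)
  have hmem₁ : ((-z₀ : E × StrongDual ℝ E), rf₁ + rt₁ - b₁.2 x) ∈ A :=
    ⟨b₁, rf₁, rt₁, hbs₁, hbt₁, le_refl _⟩
  have hTN : ∀ z ∈ Metric.ball z₀ δ, ((z, 2 * (N : ℝ) + (N : ℝ) * ‖x‖)) ∈ A := by
    intro z hz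
    obtain ⟨b, h1, h2, h3, h4⟩ := hballD hz
    refine ⟨b, (N : ℝ), (N : ℝ), h3, h4, ?_⟩
    have h5 : |b.2 x| ≤ ‖b.2‖ * ‖x‖ := by
      have h6 := b.2.le_opNorm x
      rwa [Real.norm_eq_abs] at h6
    have h6 : ‖b.2‖ * ‖x‖ ≤ (N : ℝ) * ‖x‖ := mul_le_mul_of_nonneg_right h2 (norm_nonneg x)
    have h7 := (abs_le.1 h5).1
    show (N : ℝ) + (N : ℝ) - b.2 x ≤ 2 * (N : ℝ) + (N : ℝ) * ‖x‖
    linarith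
  have hwM : ∀ w : E × StrongDual ℝ E, ‖w‖ < δ / 2 →
      ((w, ((2 * (N : ℝ) + (N : ℝ) * ‖x‖) + (rf₁ + rt₁ - b₁.2 x)) / 2) ∈ A) := by
    intro w hw
    have hz' : z₀ + (2 : ℝ) • w ∈ Metric.ball z₀ δ := by
      rw [Metric.mem_ball, dist_eq_norm]
      have e : z₀ + (2 : ℝ) • w - z₀ = (2 : ℝ) • w := by abel
      rw [e, norm_smul, Real.norm_eq_abs]
      rw [abs_of_pos (by norm_num : (0:ℝ) < 2)]
      linarith
    have h1 := hTN _ hz'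
    have hcomb := hconv h1 hmem₁ (by norm_num : (0:ℝ) ≤ 1/2) (by norm_num : (0:ℝ) ≤ 1/2)
      (by norm_num : (1/2 : ℝ) + 1/2 = 1)
    have e : ((1/2 : ℝ) • ((z₀ + (2:ℝ) • w, 2 * (N : ℝ) + (N : ℝ) * ‖x‖) :
          (E × StrongDual ℝ E) × ℝ))
        + (1/2 : ℝ) • ((-z₀, rf₁ + rt₁ - b₁.2 x) : (E × StrongDual ℝ E) × ℝ)
        = (w, ((2 * (N : ℝ) + (N : ℝ) * ‖x‖) + (rf₁ + rt₁ - b₁.2 x)) / 2) := by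
      rw [Prod.ext_iff]
      constructor
      · show (1/2 : ℝ) • (z₀ + (2:ℝ) • w) + (1/2 : ℝ) • (-z₀) = w
        rw [smul_add, smul_smul, smul_neg]
        norm_num
      · show (1/2 : ℝ) * (2 * (N : ℝ) + (N : ℝ) * ‖x‖)
            + (1/2 : ℝ) * (rf₁ + rt₁ - b₁.2 x) = _
        ring
    rwa [e] at hcomb
  have hbox : Metric.ball (0 : E × StrongDual ℝ E) (δ/2) ×ˢ
      Set.Ioi (((2 * (N : ℝ) + (N : ℝ) * ‖x‖) + (rf₁ + rt₁ - b₁.2 x)) / 2) ⊆ A := by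
    rintro ⟨w, t⟩ ⟨hw, ht⟩
    have h1 := hwM w (by rwa [Metric.mem_ball, dist_zero_right] at hw)
    obtain ⟨b, rf, rt, k1, k2, k3⟩ := h1
    exact ⟨b, rf, rt, k1, k2, k3.trans (le_of_lt ht)⟩
  -- separation
  obtain ⟨c, hc⟩ := st19_separation hconv (by linarith : (0:ℝ) < δ/2) hbox hA0
  set c₁ : StrongDual ℝ E :=
    c.comp (ContinuousLinearMap.inl ℝ E (StrongDual ℝ E)) with hc₁
  obtain ⟨u, hu⟩ := hrefl (c.comp (ContinuousLinearMap.inr ℝ E (StrongDual ℝ E)))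
  have hcz : ∀ z : E × StrongDual ℝ E, c z = c₁ z.1 + z.2 u := by
    intro z
    have e1 : z = (z.1, 0) + (0, z.2) := by
      rw [Prod.ext_iff]; constructor <;> simp
    have e2 : c₁ z.1 = c (z.1, 0) := rfl
    have e3 : z.2 u = c (0, z.2) := by
      have h4 : NormedSpace.inclusionInDoubleDual ℝ E u z.2
          = (c.comp (ContinuousLinearMap.inr ℝ E (StrongDual ℝ E))) z.2 := by
        rw [hu]
      exact h4
    rw [e2, e3, ← map_add, ← e1]
  -- the master inequality
  have hMI : ∀ b' b : E × StrongDual ℝ E, ∀ rf rt : ℝ,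
      SleP S b' rf → TleP T (b.2, x - b.1) rt →
      c₁ (b' - b).1 + (b' - b).2 u ≤ rf + rt - b.2 x := by
    intro b' b rf rt h1 h2
    have hmem : ((b' - b, rf + rt - b.2 x) : (E × StrongDual ℝ E) × ℝ) ∈ A := by
      refine ⟨b, rf, rt, ?_, h2, le_refl _⟩
      show SleP S (b + (b' - b)) rf
      have e : b + (b' - b) = b' := by abel
      rw [e]; exact h1
    have h3 := hc _ hmem
    rw [hcz] at h3
    exact h3
  -- step 1: (c₁, x - u) is monotonically related to the graph of T
  have hstep1 : ∀ t ∈ graphOfT T, (0:ℝ) ≤ (c₁ - t.1) ((x - u) - t.2) := by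
    intro t ht
    have hSle : SleP S (u, c₁) (c₁ (x - t.2) + t.1 u + t.1 t.2 - t.1 x) := by
      intro s hs
      have htle : TleP T ((t.1 : StrongDual ℝ E), x - (x - t.2)) (t.1 t.2) := by
        have e : x - (x - t.2) = t.2 := by abel
        rw [e]
        exact TleP_self hTmono ht
      have h1 := hMI s (x - t.2, t.1) (s.2 s.1) (t.1 t.2) (SleP_self hSmono hs) htle
      have e1 : c₁ ((s - ((x - t.2, t.1) : E × StrongDual ℝ E)).1)
          = c₁ s.1 - c₁ (x - t.2) := by
        show c₁ (s.1 - (x - t.2)) = _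
        exact map_sub _ _ _
      have e2 : ((s - ((x - t.2, t.1) : E × StrongDual ℝ E)).2) u
          = s.2 u - t.1 u := by
        show (s.2 - t.1) u = _
        exact ContinuousLinearMap.sub_apply _ _ _
      rw [e1, e2] at h1
      have e3 : (((x - t.2, t.1) : E × StrongDual ℝ E).2) x = t.1 x := rfl
      rw [e3] at h1
      linarith
    have h5 : c₁ u ≤ c₁ (x - t.2) + t.1 u + t.1 t.2 - t.1 x := qleS hS hSle
    have e : (c₁ - t.1) ((x - u) - t.2)
        = c₁ (x - t.2) + t.1 u + t.1 t.2 - t.1 x - c₁ u := by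
      simp only [ContinuousLinearMap.sub_apply, map_sub]
      ring
    rw [e]; linarith
  -- step 2: (c₁, x - u) belongs to the graph of T
  have hTg : ((c₁, x - u) : StrongDual ℝ E × E) ∈ graphOfT T := by
    apply gmemT hT
    intro t ht
    have h1 := hstep1 t ht
    have e : (c₁ - t.1) ((x - u) - t.2)
        = c₁ (x - u) - (c₁ t.2 + t.1 (x - u) - t.1 t.2) := by
      simp only [ContinuousLinearMap.sub_apply, map_sub]
      ring
    rw [e] at h1
    show c₁ t.2 + t.1 (x - u) - t.1 t.2 ≤ c₁ (x - u)
    linarith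
  -- step 3: (u, c₁) belongs to the graph of S
  have hSg : ((u, c₁) : E × StrongDual ℝ E) ∈ graphOf S := by
    apply gmemS hS
    intro s hs
    have htle : TleP T ((c₁ : StrongDual ℝ E), x - u) (c₁ (x - u)) :=
      TleP_self hTmono hTg
    have h1 := hMI s (u, c₁) (s.2 s.1) (c₁ (x - u)) (SleP_self hSmono hs) htle
    have e1 : c₁ ((s - ((u, c₁) : E × StrongDual ℝ E)).1) = c₁ s.1 - c₁ u := by
      show c₁ (s.1 - u) = _
      exact map_sub _ _ _
    have e2 : ((s - ((u, c₁) : E × StrongDual ℝ E)).2) u = s.2 u - c₁ u := by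
      show (s.2 - c₁) u = _
      exact ContinuousLinearMap.sub_apply _ _ _
    have e3 : c₁ (x - u) = c₁ x - c₁ u := map_sub _ _ _
    rw [e1, e2] at h1
    have e4 : (((u, c₁) : E × StrongDual ℝ E).2) x = c₁ x := rfl
    rw [e4, e3] at h1
    show s.2 u + c₁ s.1 - s.2 s.1 ≤ c₁ u
    linarith
  exact ⟨u, c₁, hSg, x - u, hTg, by abel⟩
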